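/- For η > 0 and ψ ∈ ℝ, 1/(cosh η − cos ψ)³ = (1/(2 sinh⁵η))·Σ_{n=0}^∞ ε_n·cos(nψ)·e^{−nη}·[(n²−1)sinh²η + 3n·sinh η·cosh η + 3cosh²η], where ε_n = 2 − δ_{n,0}, and the series converges absolutely. -/

import Mathlib

noncomputable def neumann (n : ℕ) : ℝ := if n = 0 then 1 else 2

private lemma fourier_aux1 (E M U : ℂ) (hE : E ≠ 0) (hU : U ≠ 0) :
    4 * ((E ^ 2 - 1) / (2 * E)) ^ 2 * (M ^ 3 / U ^ 3) +
      6 * ((E ^ 2 - 1) / (2 * E)) * ((E ^ 2 + 1) / (2 * E) - (E ^ 2 - 1) / (2 * E)) *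
        (M ^ 2 / U ^ 2) +
      6 * ((E ^ 2 + 1) / (2 * E)) * ((E ^ 2 + 1) / (2 * E) - (E ^ 2 - 1) / (2 * E)) *
        (M ^ 1 / U ^ 1) -
      (-((E ^ 2 - 1) / (2 * E)) ^ 2 + 3 * ((E ^ 2 + 1) / (2 * E)) ^ 2) =
    (4 * (E ^ 2 - 1) ^ 2 * M ^ 3 + 12 * (E ^ 2 - 1) * M ^ 2 * U + 12 * (E ^ 2 + 1) * M * U ^ 2 -
      (3 * (E ^ 2 + 1) ^ 2 - (E ^ 2 - 1) ^ 2) * U ^ 3) / (4 * E ^ 2 * U ^ 3) := by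
  have hD : (4 : ℂ) * E ^ 2 * U ^ 3 ≠ 0 := by
    exact mul_ne_zero (mul_ne_zero (by norm_num) (pow_ne_zero _ hE)) (pow_ne_zero _ hU)
  have t1 : 4 * ((E ^ 2 - 1) / (2 * E)) ^ 2 * (M ^ 3 / U ^ 3) =
      4 * (E ^ 2 - 1) ^ 2 * M ^ 3 / (4 * E ^ 2 * U ^ 3) := by
    field_simp
    try ring
    try simp
    try ring
  have t2 : 6 * ((E ^ 2 - 1) / (2 * E)) * ((E ^ 2 + 1) / (2 * E) - (E ^ 2 - 1) / (2 * E)) *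
      (M ^ 2 / U ^ 2) = 12 * (E ^ 2 - 1) * M ^ 2 * U / (4 * E ^ 2 * U ^ 3) := by
    field_simp
    try ring
    try simp
    try ring
  have t3 : 6 * ((E ^ 2 + 1) / (2 * E)) * ((E ^ 2 + 1) / (2 * E) - (E ^ 2 - 1) / (2 * E)) *
      (M ^ 1 / U ^ 1) = 12 * (E ^ 2 + 1) * M * U ^ 2 / (4 * E ^ 2 * U ^ 3) := by
    field_simp
    try ring
    try simp
    try ring
  have t4 : (-((E ^ 2 - 1) / (2 * E)) ^ 2 + 3 * ((E ^ 2 + 1) / (2 * E)) ^ 2) =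
      (3 * (E ^ 2 + 1) ^ 2 - (E ^ 2 - 1) ^ 2) * U ^ 3 / (4 * E ^ 2 * U ^ 3) := by
    field_simp
    try ring
    try simp
    try ring
  rw [t1, t2, t3, t4, ← add_div, ← add_div, div_sub_div_same]

private lemma fourier_aux2 (E W V U : ℂ) (hE : E ≠ 0) (hW : W ≠ 0) (hV : V ≠ 0) (hU : U ≠ 0) :
    2 * (2 * ((E ^ 2 - 1) / (2 * E)) ^ 5 / (V * U / (2 * (E * W))) ^ 3) =
      (E ^ 2 - 1) ^ 5 * W ^ 3 / (E ^ 2 * (V ^ 3 * U ^ 3)) := by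
  have h1 : (V * U / (2 * (E * W))) ^ 3 = (V * U) ^ 3 / (2 * (E * W)) ^ 3 := div_pow _ _ _
  rw [h1, div_div_eq_mul_div, div_pow]
  simp only [← mul_div_assoc, div_mul_eq_mul_div, div_div]
  rw [div_eq_div_iff
    (mul_ne_zero (pow_ne_zero _ (mul_ne_zero two_ne_zero hE))
      (pow_ne_zero _ (mul_ne_zero hV hU)))
    (mul_ne_zero (pow_ne_zero _ hE) (mul_ne_zero (pow_ne_zero _ hV) (pow_ne_zero _ hU)))]
  ring

set_option maxHeartbeats 2000000 in
theorem inv_cube_cosh_sub_cos_fourier (η ψ : ℝ) (hη : 0 < η) :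
    (Summable fun n : ℕ =>
      |neumann n * Real.cos (n * ψ) * Real.exp (-(n : ℝ) * η) *
        (((n : ℝ) ^ 2 - 1) * Real.sinh η ^ 2 + 3 * n * Real.sinh η * Real.cosh η +
          3 * Real.cosh η ^ 2)|) ∧
    1 / (Real.cosh η - Real.cos ψ) ^ 3 =
      (1 / (2 * Real.sinh η ^ 5)) *
        ∑' n : ℕ, neumann n * Real.cos (n * ψ) * Real.exp (-(n : ℝ) * η) *
          (((n : ℝ) ^ 2 - 1) * Real.sinh η ^ 2 + 3 * n * Real.sinh η * Real.cosh η +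
            3 * Real.cosh η ^ 2) := by
  have hs : 0 < Real.sinh η := Real.sinh_pos_iff.2 hη
  have hc : (1 : ℝ) < Real.cosh η := Real.one_lt_cosh.2 hη.ne'
  set s := Real.sinh η with hsdef
  set c := Real.cosh η with hcdef
  set P : ℕ → ℝ := fun n => ((n : ℝ) ^ 2 - 1) * s ^ 2 + 3 * n * s * c + 3 * c ^ 2 with hPdef
  set z : ℂ := Complex.exp (-(η : ℂ) + (ψ : ℂ) * Complex.I) with hzdef
  have hznorm : ‖z‖ = Real.exp (-η) := by
    rw [hzdef, Complex.norm_exp]; simp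
  have hzlt : ‖z‖ < 1 := by
    rw [hznorm]; exact Real.exp_lt_one_iff.2 (by linarith)
  set f : ℕ → ℂ := fun n => ((neumann n * P n : ℝ) : ℂ) * z ^ n with hfdef
  -- Complex HasSum of f
  have h2 := hasSum_choose_mul_geometric_of_norm_lt_one (𝕜 := ℂ) 2 hzlt
  have h1 := hasSum_choose_mul_geometric_of_norm_lt_one (𝕜 := ℂ) 1 hzlt
  have h0 := hasSum_choose_mul_geometric_of_norm_lt_one (𝕜 := ℂ) 0 hzlt
  set S : ℂ := 4 * (s : ℂ) ^ 2 * (1 / (1 - z) ^ 3) +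
      6 * (s : ℂ) * ((c : ℂ) - s) * (1 / (1 - z) ^ 2) +
      6 * (c : ℂ) * ((c : ℂ) - s) * (1 / (1 - z) ^ 1) - ((P 0 : ℝ) : ℂ) with hSdef
  have hg : HasSum (fun n : ℕ => ((2 * P n : ℝ) : ℂ) * z ^ n)
      (4 * (s : ℂ) ^ 2 * (1 / (1 - z) ^ 3) +
        6 * (s : ℂ) * ((c : ℂ) - s) * (1 / (1 - z) ^ 2) +
        6 * (c : ℂ) * ((c : ℂ) - s) * (1 / (1 - z) ^ 1)) := by
    have := ((h2.mul_left (4 * (s : ℂ) ^ 2)).add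
        (h1.mul_left (6 * (s : ℂ) * ((c : ℂ) - s)))).add
        (h0.mul_left (6 * (c : ℂ) * ((c : ℂ) - s)))
    refine this.congr_fun fun n => ?_
    have e2 : (((n + 2).choose 2 : ℕ) : ℂ) = ((n : ℂ) + 2) * ((n : ℂ) + 1) / 2 := by
      rw [Nat.cast_choose_two]; push_cast; ring
    have e1 : (((n + 1).choose 1 : ℕ) : ℂ) = (n : ℂ) + 1 := by
      rw [Nat.choose_one_right]; push_cast; ring
    have e0 : (((n + 0).choose 0 : ℕ) : ℂ) = 1 := by simp
    rw [e2, e1, e0, hPdef]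
    push_cast
    ring
  have hsingle : HasSum (fun n : ℕ => if n = 0 then ((P 0 : ℝ) : ℂ) else 0) ((P 0 : ℝ) : ℂ) :=
    hasSum_ite_eq 0 _
  have hf : HasSum f S := by
    rw [hSdef]
    have := hg.sub hsingle
    refine this.congr_fun fun n => ?_
    by_cases hn : n = 0
    · subst hn
      simp only [hfdef, neumann, if_pos rfl, if_true, pow_zero, mul_one, Nat.cast_zero]
      push_cast
      ring
    · simp only [hfdef, neumann, if_neg hn]
      push_cast
      ring
  -- real part
  have hrterm : ∀ n : ℕ, (f n).re =
      neumann n * Real.cos (n * ψ) * Real.exp (-(n : ℝ) * η) * P n := by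
    intro n
    have hzn : z ^ n = Complex.exp ((n : ℂ) * (-(η : ℂ) + (ψ : ℂ) * Complex.I)) := by
      rw [hzdef, Complex.exp_nat_mul]
    have hre : ((n : ℂ) * (-(η : ℂ) + (ψ : ℂ) * Complex.I)).re = -(n : ℝ) * η := by simp
    have him : ((n : ℂ) * (-(η : ℂ) + (ψ : ℂ) * Complex.I)).im = (n : ℝ) * ψ := by simp
    have := Complex.re_ofReal_mul (neumann n * P n)
      (Complex.exp ((n : ℂ) * (-(η : ℂ) + (ψ : ℂ) * Complex.I)))
    rw [hfdef]
    simp only [hzn]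
    rw [Complex.re_ofReal_mul, Complex.exp_re, hre, him]
    ring
  have hre : HasSum (fun n : ℕ =>
      neumann n * Real.cos (n * ψ) * Real.exp (-(n : ℝ) * η) * P n) S.re := by
    have := Complex.hasSum_re hf
    refine this.congr_fun fun n => (hrterm n).symm
  -- the closed form of S.re
  have hT : S.re = 2 * s ^ 5 / (c - Real.cos ψ) ^ 3 := by
    set E : ℂ := Complex.exp (η : ℂ) with hEdef
    set W : ℂ := Complex.exp ((ψ : ℂ) * Complex.I) with hWdef
    have hE : E ≠ 0 := Complex.exp_ne_zero _
    have hW : W ≠ 0 := Complex.exp_ne_zero _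
    have hz1 : z = E⁻¹ * W := by
      rw [hzdef, Complex.exp_add, Complex.exp_neg, hEdef, hWdef]
    have hzc : (starRingEnd ℂ) z = E⁻¹ * W⁻¹ := by
      rw [hzdef, ← Complex.exp_conj]
      have : (starRingEnd ℂ) (-(η : ℂ) + (ψ : ℂ) * Complex.I) =
          -(η : ℂ) + -((ψ : ℂ) * Complex.I) := by
        simp [map_add, map_mul, Complex.conj_ofReal, Complex.conj_I]
      rw [this, Complex.exp_add, Complex.exp_neg, Complex.exp_neg, hEdef, hWdef]
    have hsE : (s : ℂ) = (E ^ 2 - 1) / (2 * E) := by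
      rw [hsdef, Complex.ofReal_sinh, Complex.sinh, Complex.exp_neg, hEdef]
      field_simp [Complex.exp_ne_zero]
    have hcE : (c : ℂ) = (E ^ 2 + 1) / (2 * E) := by
      rw [hcdef, Complex.ofReal_cosh, Complex.cosh, Complex.exp_neg, hEdef]
      field_simp [Complex.exp_ne_zero]
    have hcosW : ((Real.cos ψ : ℝ) : ℂ) = (W + W⁻¹) / 2 := by
      rw [Complex.ofReal_cos, Complex.cos, hWdef, ← Complex.exp_neg]
      ring_nf
    have hcosW' : Complex.cos (ψ : ℂ) = (W + W⁻¹) / 2 := by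
      rw [← Complex.ofReal_cos]; exact hcosW
    have h1z : (1 : ℂ) - z ≠ 0 := by
      intro h
      have : z = 1 := by linear_combination -h
      rw [this] at hzlt; simp at hzlt
    have h1zc : (1 : ℂ) - (starRingEnd ℂ) z ≠ 0 := by
      intro h
      have hz' : (starRingEnd ℂ) z = 1 := by linear_combination -h
      have : ‖(starRingEnd ℂ) z‖ < 1 := by rwa [RCLike.norm_conj]
      rw [hz'] at this; simp at this
    have hdR : (0 : ℝ) < c - Real.cos ψ := by
      have := Real.cos_le_one ψ; linarith
    have hd : ((c : ℂ) - ((Real.cos ψ : ℝ) : ℂ)) ≠ 0 := by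
      rw [← Complex.ofReal_sub]
      exact Complex.ofReal_ne_zero.2 hdR.ne'
    -- key complex identity
    have key : S + (starRingEnd ℂ) S =
        ((2 * (2 * s ^ 5 / (c - Real.cos ψ) ^ 3) : ℝ) : ℂ) := by
      have hconjS : (starRingEnd ℂ) S =
          4 * (s : ℂ) ^ 2 * (1 / (1 - (starRingEnd ℂ) z) ^ 3) +
          6 * (s : ℂ) * ((c : ℂ) - s) * (1 / (1 - (starRingEnd ℂ) z) ^ 2) +
          6 * (c : ℂ) * ((c : ℂ) - s) * (1 / (1 - (starRingEnd ℂ) z) ^ 1) -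
          ((P 0 : ℝ) : ℂ) := by
        rw [hSdef]
        simp [map_add, map_sub, map_mul, map_div₀, map_pow, map_one, map_ofNat,
          Complex.conj_ofReal]
      have hEW : E - W ≠ 0 := by
        intro h
        have hWE : W = E := by linear_combination -h
        have : z = 1 := by rw [hz1, hWE, inv_mul_cancel₀ hE]
        rw [this] at hzlt; simp at hzlt
      have hEW1 : E * W - 1 ≠ 0 := by
        intro h
        have : (starRingEnd ℂ) z = 1 := by
          rw [hzc, ← mul_inv, show E * W = 1 from by linear_combination h, inv_one]
        have h2 : ‖(starRingEnd ℂ) z‖ < 1 := by rwa [RCLike.norm_conj]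
        rw [this] at h2; simp at h2
      have h1mz : (1 : ℂ) - z = (E - W) / E := by
        rw [hz1]; field_simp
      have h1mzc : (1 : ℂ) - (starRingEnd ℂ) z = (E * W - 1) / (E * W) := by
        rw [hzc]; field_simp
      have hd2 : (c : ℂ) - Complex.cos (ψ : ℂ) = (E - W) * (E * W - 1) / (2 * (E * W)) := by
        rw [hcE, hcosW']; field_simp; ring
      have hP0 : ((P 0 : ℝ) : ℂ) = -(s : ℂ) ^ 2 + 3 * (c : ℂ) ^ 2 := by
        rw [hPdef]; push_cast; ring
      have hA : ∀ k : ℕ, 1 / (1 - z) ^ k = E ^ k / (E - W) ^ k := by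
        intro k
        rw [h1mz, div_pow, one_div, inv_div]
      have hB : ∀ k : ℕ, 1 / (1 - (starRingEnd ℂ) z) ^ k = (E * W) ^ k / (E * W - 1) ^ k := by
        intro k
        rw [h1mzc, div_pow, one_div, inv_div]
      have hD1 : (4 : ℂ) * E ^ 2 * (E - W) ^ 3 ≠ 0 :=
        mul_ne_zero (mul_ne_zero (by norm_num) (pow_ne_zero _ hE)) (pow_ne_zero _ hEW)
      have hD2 : (4 : ℂ) * E ^ 2 * (E * W - 1) ^ 3 ≠ 0 :=
        mul_ne_zero (mul_ne_zero (by norm_num) (pow_ne_zero _ hE)) (pow_ne_zero _ hEW1)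
      have hD3 : (E : ℂ) ^ 2 * ((E - W) ^ 3 * (E * W - 1) ^ 3) ≠ 0 :=
        mul_ne_zero (pow_ne_zero _ hE)
          (mul_ne_zero (pow_ne_zero _ hEW) (pow_ne_zero _ hEW1))
      have hSval : S = (4 * (E ^ 2 - 1) ^ 2 * E ^ 3 + 12 * (E ^ 2 - 1) * E ^ 2 * (E - W) +
          12 * (E ^ 2 + 1) * E * (E - W) ^ 2 -
          (3 * (E ^ 2 + 1) ^ 2 - (E ^ 2 - 1) ^ 2) * (E - W) ^ 3) /
          (4 * E ^ 2 * (E - W) ^ 3) := by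
        rw [hSdef, hP0, hA 3, hA 2, hA 1, hsE, hcE]
        exact fourier_aux1 E E (E - W) hE hEW
      have hScval : (starRingEnd ℂ) S =
          (4 * (E ^ 2 - 1) ^ 2 * (E * W) ^ 3 + 12 * (E ^ 2 - 1) * (E * W) ^ 2 * (E * W - 1) +
          12 * (E ^ 2 + 1) * (E * W) * (E * W - 1) ^ 2 -
          (3 * (E ^ 2 + 1) ^ 2 - (E ^ 2 - 1) ^ 2) * (E * W - 1) ^ 3) /
          (4 * E ^ 2 * (E * W - 1) ^ 3) := by
        rw [hconjS, hP0, hB 3, hB 2, hB 1, hsE, hcE]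
        exact fourier_aux1 E (E * W) (E * W - 1) hE hEW1
      have htarget : ((2 * (2 * s ^ 5 / (c - Real.cos ψ) ^ 3) : ℝ) : ℂ) =
          (E ^ 2 - 1) ^ 5 * W ^ 3 / (E ^ 2 * ((E - W) ^ 3 * (E * W - 1) ^ 3)) := by
        push_cast
        rw [hd2, hsE]
        exact fourier_aux2 E W (E - W) (E * W - 1) hE hW hEW hEW1
      rw [hScval, hSval, htarget, div_add_div _ _ hD1 hD2,
        div_eq_div_iff (mul_ne_zero hD1 hD2) hD3]
      ring
    have := Complex.add_conj S
    rw [key] at this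
    have h2 : 2 * S.re = 2 * (2 * s ^ 5 / (c - Real.cos ψ) ^ 3) := by
      exact_mod_cast this.symm
    linarith
  constructor
  · -- summability of absolute values
    set r : ℝ := Real.exp (-η) with hrdef
    have hr : ‖r‖ < 1 := by
      rw [Real.norm_eq_abs, abs_of_pos (Real.exp_pos _)]
      exact Real.exp_lt_one_iff.2 (by linarith)
    have hrpos : (0 : ℝ) < r := Real.exp_pos _
    have hM : Summable (fun n : ℕ =>
        2 * (s ^ 2 * ((n : ℝ) ^ 2 + 1) + 3 * n * s * c + 3 * c ^ 2) * r ^ n) := by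
      have a2 := summable_pow_mul_geometric_of_norm_lt_one (R := ℝ) 2 hr
      have a1 := summable_pow_mul_geometric_of_norm_lt_one (R := ℝ) 1 hr
      have a0 := summable_pow_mul_geometric_of_norm_lt_one (R := ℝ) 0 hr
      have := ((a2.mul_left (2 * s ^ 2)).add (a1.mul_left (6 * s * c))).add
        (a0.mul_left (2 * s ^ 2 + 6 * c ^ 2))
      refine this.congr fun n => ?_
      push_cast
      ring
    refine Summable.of_nonneg_of_le (fun n => abs_nonneg _) (fun n => ?_) hM
    have h1 : |neumann n| ≤ 2 := by
      unfold neumann; split <;> norm_num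
    have h2 : |Real.cos (n * ψ)| ≤ 1 := Real.abs_cos_le_one _
    have h3 : |P n| ≤ s ^ 2 * ((n : ℝ) ^ 2 + 1) + 3 * n * s * c + 3 * c ^ 2 := by
      rw [hPdef]
      have : |((n : ℝ) ^ 2 - 1) * s ^ 2 + 3 * n * s * c + 3 * c ^ 2| ≤
          |((n : ℝ) ^ 2 - 1) * s ^ 2| + |3 * (n : ℝ) * s * c| + |3 * c ^ 2| :=
        (abs_add_le _ _).trans (add_le_add_left (abs_add_le _ _) _)
      refine this.trans ?_
      have e1 : |((n : ℝ) ^ 2 - 1) * s ^ 2| ≤ ((n : ℝ) ^ 2 + 1) * s ^ 2 := by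
        rw [abs_mul, abs_of_nonneg (sq_nonneg s)]
        have : |(n : ℝ) ^ 2 - 1| ≤ (n : ℝ) ^ 2 + 1 := by
          rw [abs_le]; constructor <;> nlinarith [sq_nonneg (n : ℝ)]
        nlinarith [sq_nonneg s]
      have e2 : |3 * (n : ℝ) * s * c| = 3 * n * s * c := by
        rw [abs_of_nonneg]; positivity
      have e3 : |3 * c ^ 2| = 3 * c ^ 2 := by rw [abs_of_nonneg]; positivity
      rw [e2, e3]; nlinarith [sq_nonneg s]
    have hexp : Real.exp (-(n : ℝ) * η) = r ^ n := by
      rw [hrdef, ← Real.exp_nat_mul]; ring_nf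
    calc |neumann n * Real.cos (n * ψ) * Real.exp (-(n : ℝ) * η) * P n|
        = |neumann n| * |Real.cos (n * ψ)| * Real.exp (-(n : ℝ) * η) * |P n| := by
          rw [abs_mul, abs_mul, abs_mul, abs_of_nonneg (Real.exp_pos _).le]
      _ ≤ 2 * 1 * r ^ n * (s ^ 2 * ((n : ℝ) ^ 2 + 1) + 3 * n * s * c + 3 * c ^ 2) := by
          rw [hexp]
          have hPn : (0:ℝ) ≤ |P n| := abs_nonneg _
          gcongr <;> first
            | positivity
            | exact h1
            | exact h2
            | exact h3
            | exact (abs_nonneg _).trans h2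
      _ = 2 * (s ^ 2 * ((n : ℝ) ^ 2 + 1) + 3 * n * s * c + 3 * c ^ 2) * r ^ n := by ring
  · rw [hre.tsum_eq, hT]
    have hs5 : (2 : ℝ) * s ^ 5 ≠ 0 := by positivity
    field_simp
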